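/- Let G(U, V; E) be a bipartite graph with parts of size n and pairwise distinct prices p_1, …, p_n ∈ [1/e, 1] on V. For a vertex v ∈ V, let y_{−v}(u) denote the utility of u in the greedy-by-price process run on the graph obtained from G by deleting v. Then for every u ∈ U, y(u) ≥ y_{−v}(u); that is, removing an item never increases, and adding an item never decreases, the utility of any buyer. -/

import Mathlib

open scoped Classical

noncomputable section

/-- The element of `c` minimizing `key`, if `c` is nonempty. -/
def pickMin {n : ℕ} {α : Type*} [LinearOrder α] (key : Fin n → α)
    (c : Finset (Fin n)) : Option (Fin n) :=
  if h : c.Nonempty then some (Classical.choose (Finset.exists_min_image c key h)) else none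

/-- The set of matched `V`-vertices after the first `j` arrivals of the online greedy
process on the bipartite graph with `U`-side arrival order `u_0, u_1, …` and adjacency
`adj`, in which each arriving `u_j` is matched to its currently unmatched neighbor
minimizing `key` (if any). -/
def greedyRun {n : ℕ} {α : Type*} [LinearOrder α] (adj : ℕ → Fin n → Prop)
    (key : Fin n → α) : ℕ → Finset (Fin n)
  | 0 => ∅
  | j + 1 =>
    match pickMin key ((Finset.univ.filter fun i => adj j i) \ greedyRun adj key j) with
    | some v => insert v (greedyRun adj key j)
    | none => greedyRun adj key j

/-- The `V`-vertex that the arriving vertex `u_j` (0-indexed) gets matched to, if any. -/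
def greedyMatchU {n : ℕ} {α : Type*} [LinearOrder α] (adj : ℕ → Fin n → Prop)
    (key : Fin n → α) (j : ℕ) : Option (Fin n) :=
  pickMin key ((Finset.univ.filter fun i => adj j i) \ greedyRun adj key j)

/-- Adjacency of the monotone graph `MonotoneG` (0-indexed):
`u_j` is adjacent to `v_i` iff `j ≤ i`. -/
def monoAdj (n : ℕ) : ℕ → Fin n → Prop := fun j i => j ≤ (i : ℕ)

/-- The set of matched `V`-vertices produced by the Ranking greedy process on `MonotoneG`
with permutation `π` (where `π i` is the rank of `v_i`, 0-indexed). -/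
def rankMatched (n : ℕ) (π : Equiv.Perm (Fin n)) : Finset (Fin n) :=
  greedyRun (monoAdj n) (fun i => π i) n

/-- `x(π)`: the number of edges of the matching produced by Ranking on `MonotoneG`. -/
def xSize (n : ℕ) (π : Equiv.Perm (Fin n)) : ℕ := (rankMatched n π).card

/-- `a(n) = Σ_π x(π)`, over all `n!` permutations. -/
def aVal (n : ℕ) : ℕ := ∑ π : Equiv.Perm (Fin n), xSize n π

/-- `a(n,i)` (with `i` 1-indexed): the number of permutations `π` of `{1,…,n}` for which
the vertex of rank `i` under `π` is matched by the Ranking greedy process on `MonotoneG`. -/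
def aIdx (n i : ℕ) : ℕ :=
  (Finset.univ.filter fun π : Equiv.Perm (Fin n) =>
    ∃ v : Fin n, (π v : ℕ) = i - 1 ∧ v ∈ rankMatched n π).card

/-- `d(m,i)` (with `i` 1-indexed): the number of permutations of `{1,…,m}` all of whose
fixed points (if any) lie among the first `i` items. -/
def dIdx (m i : ℕ) : ℕ :=
  (Finset.univ.filter fun σ : Equiv.Perm (Fin m) => ∀ x, σ x = x → (x : ℕ) < i).card

/-- `d(m)`: the number of derangements of `{1,…,m}`. -/
def numDer (m : ℕ) : ℕ :=
  (Finset.univ.filter fun σ : Equiv.Perm (Fin m) => ∀ x, σ x ≠ x).card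

/-- The key for the greedy-by-price process: buy the cheapest available item,
breaking ties in favor of the smaller index. -/
def priceKey {n : ℕ} (p : Fin n → ℝ) : Fin n → Lex (ℝ × ℕ) := fun i => toLex (p i, (i : ℕ))

/-- The utility `y(u_j)` of buyer `u_j` (0-indexed) in the greedy-by-price process:
`1 - p v` if `u_j` buys item `v`, and `0` if `u_j` remains unmatched. -/
def utility (n : ℕ) (adj : ℕ → Fin n → Prop) (p : Fin n → ℝ) (j : ℕ) : ℝ :=
  (greedyMatchU adj (priceKey p) j).elim 0 (fun v => 1 - p v)

/-- The revenue `r(v)` from item `v` in the greedy-by-price process: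
`p v` if `v` is sold, and `0` otherwise. -/
def revenue (n : ℕ) (adj : ℕ → Fin n → Prop) (p : Fin n → ℝ) (v : Fin n) : ℝ :=
  if v ∈ greedyRun adj (priceKey p) n then p v else 0

/-- The `m`-th harmonic number `H_m = Σ_{i=1}^m 1/i` (with `H_0 = 0`). -/
def harm (m : ℕ) : ℝ := ∑ i ∈ Finset.range m, (1 : ℝ) / (i + 1)

section auxlemmas

lemma pickMin_some {n : ℕ} {α : Type*} [LinearOrder α] {key : Fin n → α}
    {c : Finset (Fin n)} {m : Fin n} (h : pickMin key c = some m) :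
    m ∈ c ∧ ∀ x ∈ c, key m ≤ key x := by
  unfold pickMin at h
  split_ifs at h with hc
  obtain ⟨h1, h2⟩ := Classical.choose_spec (Finset.exists_min_image c key hc)
  have he : Classical.choose (Finset.exists_min_image c key hc) = m :=
    Option.some_injective _ h
  rw [he] at h1 h2
  exact ⟨h1, h2⟩

lemma pickMin_none_iff {n : ℕ} {α : Type*} [LinearOrder α] {key : Fin n → α}
    {c : Finset (Fin n)} : pickMin key c = none ↔ c = ∅ := by
  unfold pickMin
  split_ifs with hc
  · simp [Finset.nonempty_iff_ne_empty.mp hc]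
  · simp [Finset.not_nonempty_iff_eq_empty.mp hc]

lemma pickMin_isSome {n : ℕ} {α : Type*} [LinearOrder α] {key : Fin n → α}
    {c : Finset (Fin n)} (h : c.Nonempty) : ∃ m, pickMin key c = some m := by
  simp [pickMin, h]

lemma pickMin_eq_some {n : ℕ} {α : Type*} [LinearOrder α] {key : Fin n → α}
    (hkey : Function.Injective key) {c : Finset (Fin n)} {m : Fin n}
    (hm : m ∈ c) (hmin : ∀ x ∈ c, key m ≤ key x) : pickMin key c = some m := by
  unfold pickMin
  rw [dif_pos ⟨m, hm⟩]
  congr 1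
  obtain ⟨h1, h2⟩ := Classical.choose_spec (Finset.exists_min_image c key ⟨m, hm⟩)
  exact hkey (le_antisymm (h2 m hm) (hmin _ h1))

lemma greedyRun_succ {n : ℕ} {α : Type*} [LinearOrder α] (adj : ℕ → Fin n → Prop)
    (key : Fin n → α) (j : ℕ) :
    greedyRun adj key (j + 1) =
      match pickMin key ((Finset.univ.filter fun i => adj j i) \ greedyRun adj key j) with
      | some v => insert v (greedyRun adj key j)
      | none => greedyRun adj key j := rfl

/-- The invariant relating the greedy run on `adj` with the run on `adj` with `v` deleted. -/
lemma greedy_delete_inv {n : ℕ} {α : Type*} [LinearOrder α] (adj adj' : ℕ → Fin n → Prop)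
    (key : Fin n → α) (hkey : Function.Injective key) (v : Fin n)
    (hdel : ∀ a b, adj' a b ↔ (adj a b ∧ b ≠ v)) (j : ℕ) :
    (v ∉ greedyRun adj key j ∧ greedyRun adj' key j = greedyRun adj key j) ∨
      (v ∈ greedyRun adj key j ∧
        (greedyRun adj' key j = (greedyRun adj key j).erase v ∨
          ∃ w, w ∉ greedyRun adj key j ∧ w ≠ v ∧
            greedyRun adj' key j = insert w ((greedyRun adj key j).erase v))) := by
  induction j with
  | zero => exact Or.inl ⟨Finset.notMem_empty v, rfl⟩
  | succ j ih =>
    rw [greedyRun_succ adj key j, greedyRun_succ adj' key j]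
    set R := greedyRun adj key j with hR
    set R' := greedyRun adj' key j with hRd
    set F : Finset (Fin n) := Finset.univ.filter fun i => adj j i with hF
    have hFd : (Finset.univ.filter fun i => adj' j i) = F.erase v := by
      ext x
      simp only [hF, Finset.mem_filter, Finset.mem_univ, true_and, Finset.mem_erase,
        hdel j x]
      tauto
    rw [hFd]
    set A : Finset (Fin n) := F \ R with hA
    rcases ih with ⟨hv, hRR⟩ | ⟨hv, hRR | ⟨w, hw, hwv, hRR⟩⟩
    · -- case E : R' = R, v ∉ R
      have hA' : F.erase v \ R' = A.erase v := by
        ext x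
        simp only [hA, Finset.mem_sdiff, Finset.mem_erase, hRR]
        tauto
      rw [hA']
      rcases hm : pickMin key A with _ | m
      · have hAe : A = ∅ := pickMin_none_iff.mp hm
        rw [hAe]
        simp only [Finset.erase_empty]
        rw [pickMin_none_iff.mpr rfl]
        exact Or.inl ⟨hv, hRR⟩
      · obtain ⟨hmA, hmin⟩ := pickMin_some hm
        by_cases hmv : m = v
        · subst hmv
          rcases hm' : pickMin key (A.erase m) with _ | w
          · exact Or.inr ⟨Finset.mem_insert_self m R,
              Or.inl (by rw [Finset.erase_insert hv, hRR])⟩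
          · obtain ⟨hwA, _⟩ := pickMin_some hm'
            rw [Finset.mem_erase] at hwA
            have hwR : w ∉ R := (Finset.mem_sdiff.mp hwA.2).2
            refine Or.inr ⟨Finset.mem_insert_self m R, Or.inr ⟨w, ?_, hwA.1, ?_⟩⟩
            · simp only [Finset.mem_insert]
              tauto
            · rw [Finset.erase_insert hv, hRR]
        · have hpm : pickMin key (A.erase v) = some m :=
            pickMin_eq_some hkey (Finset.mem_erase.mpr ⟨hmv, hmA⟩)
              (fun x hx => hmin x (Finset.mem_erase.mp hx).2)
          rw [hpm, hRR]
          refine Or.inl ⟨?_, rfl⟩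
          simp only [Finset.mem_insert]
          push_neg
          exact ⟨fun h => hmv h.symm, hv⟩
    · -- case D : R' = R.erase v, v ∈ R
      have hA' : F.erase v \ R' = A := by
        ext x
        simp only [hA, Finset.mem_sdiff, Finset.mem_erase, hRR]
        by_cases hxv : x = v
        · subst hxv
          simp only [ne_eq, not_true_eq_false, false_and, and_imp]
          tauto
        · tauto
      rw [hA']
      rcases hm : pickMin key A with _ | m
      · exact Or.inr ⟨hv, Or.inl hRR⟩
      · obtain ⟨hmA, _⟩ := pickMin_some hm
        have hmR : m ∉ R := (Finset.mem_sdiff.mp hmA).2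
        have hmv : m ≠ v := fun h => hmR (h ▸ hv)
        refine Or.inr ⟨Finset.mem_insert_of_mem hv, Or.inl ?_⟩
        rw [hRR, Finset.erase_insert_of_ne hmv]
    · -- case W : R' = insert w (R.erase v), v ∈ R, w ∉ R, w ≠ v
      have hA' : F.erase v \ R' = A.erase w := by
        ext x
        simp only [hA, Finset.mem_sdiff, Finset.mem_erase, hRR, Finset.mem_insert]
        by_cases hxv : x = v
        · subst hxv
          simp only [ne_eq, not_true_eq_false, false_and, and_false, false_iff, not_and,
            and_imp]
          tauto
        · tauto
      rw [hA']
      rcases hm : pickMin key A with _ | m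
      · have hAe : A = ∅ := pickMin_none_iff.mp hm
        rw [hAe]
        simp only [Finset.erase_empty]
        rw [pickMin_none_iff.mpr rfl]
        exact Or.inr ⟨hv, Or.inr ⟨w, hw, hwv, hRR⟩⟩
      · obtain ⟨hmA, hmin⟩ := pickMin_some hm
        have hmR : m ∉ R := (Finset.mem_sdiff.mp hmA).2
        have hmv : m ≠ v := fun h => hmR (h ▸ hv)
        by_cases hmw : m = w
        · subst hmw
          rcases hm' : pickMin key (A.erase m) with _ | w'
          · refine Or.inr ⟨Finset.mem_insert_of_mem hv, Or.inl ?_⟩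
            rw [hRR, Finset.erase_insert_of_ne hmv]
          · obtain ⟨hw'A, _⟩ := pickMin_some hm'
            rw [Finset.mem_erase] at hw'A
            have hw'R : w' ∉ R := (Finset.mem_sdiff.mp hw'A.2).2
            have hw'v : w' ≠ v := fun h => hw'R (h ▸ hv)
            refine Or.inr ⟨Finset.mem_insert_of_mem hv, Or.inr ⟨w', ?_, hw'v, ?_⟩⟩
            · simp only [Finset.mem_insert]
              tauto
            · rw [hRR, Finset.erase_insert_of_ne hmv]
        · have hpm : pickMin key (A.erase w) = some m :=
            pickMin_eq_some hkey (Finset.mem_erase.mpr ⟨hmw, hmA⟩)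
              (fun x hx => hmin x (Finset.mem_erase.mp hx).2)
          rw [hpm]
          refine Or.inr ⟨Finset.mem_insert_of_mem hv, Or.inr ⟨w, ?_, hwv, ?_⟩⟩
          · simp only [Finset.mem_insert]
            tauto
          · show insert m R' = insert w ((insert m R).erase v)
            rw [hRR, Finset.erase_insert_of_ne hmv, Finset.insert_comm]

lemma priceKey_inj {n : ℕ} (p : Fin n → ℝ) : Function.Injective (priceKey p) := by
  intro a b h
  have hv : ((p a, (a : ℕ)) : ℝ × ℕ).2 = ((p b, (b : ℕ)) : ℝ × ℕ).2 := by
    have h2 := congrArg ofLex h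
    simpa [priceKey] using congrArg Prod.snd h2
  exact Fin.ext hv

end auxlemmas

/-- Let `G(U,V;E)` be a bipartite graph with parts of size `n` (vertex `u_j` of `U` is
0-indexed by the arrival step `j < n`) with pairwise distinct prices `p i ∈ [1/e, 1]`
on `V`. For every vertex `v ∈ V` and every buyer `u_j`, the utility of `u_j` in the
greedy-by-price process on `G` with `v` deleted is at most its utility in the
greedy-by-price process on `G`: removing an item never increases, and adding an item
never decreases, the utility of any buyer. -/
theorem stmt_16 (n : ℕ) (adj : ℕ → Fin n → Prop) (p : Fin n → ℝ)
    (hp1 : ∀ i, 1 / Real.exp 1 ≤ p i ∧ p i ≤ 1) (hp2 : Function.Injective p)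
    (v : Fin n) (j : ℕ) (hj : j < n) :
    utility n (fun a b => adj a b ∧ b ≠ v) p j ≤ utility n adj p j := by
  have hkey := priceKey_inj p
  set adj2 : ℕ → Fin n → Prop := fun a b => adj a b ∧ b ≠ v with hadj2
  set key := priceKey p with hkeydef
  set R := greedyRun adj key j with hR
  set R' := greedyRun adj2 key j with hRd
  set F : Finset (Fin n) := Finset.univ.filter fun i => adj j i with hF
  have hFd : (@Finset.filter (Fin n) (fun i => adj2 j i)
      (fun a => Classical.propDecidable (adj2 j a)) Finset.univ) = F.erase v := by
    ext x
    simp only [hadj2, hF, Finset.mem_filter, Finset.mem_univ, true_and, Finset.mem_erase]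
    tauto
  have u1 : utility n adj2 p j
      = (pickMin key ((@Finset.filter (Fin n) (fun i => adj2 j i)
          (fun a => Classical.propDecidable (adj2 j a)) Finset.univ) \ R')).elim 0
          (fun i => 1 - p i) := rfl
  have u2 : utility n adj p j = (pickMin key (F \ R)).elim 0 (fun i => 1 - p i) := rfl
  rw [u1, u2, hFd]
  have hdel : ∀ a b, adj2 a b ↔ (adj a b ∧ b ≠ v) := by
    intro a b; rw [hadj2]
  have hsub : (F.erase v \ R') ⊆ (F \ R) := by
    rcases greedy_delete_inv adj adj2 key hkey v hdel j with
      ⟨hv, hRR⟩ | ⟨hv, hRR | ⟨w, hw, hwv, hRR⟩⟩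
    · rw [← hRd, ← hR] at hRR
      rw [hRR]
      exact Finset.sdiff_subset_sdiff (Finset.erase_subset _ _) le_rfl
    · rw [← hRd, ← hR] at hRR
      rw [← hR] at hv
      rw [hRR]
      intro x hx
      simp only [Finset.mem_sdiff, Finset.mem_erase] at hx ⊢
      tauto
    · rw [← hRd, ← hR] at hRR
      rw [hRR]
      intro x hx
      simp only [Finset.mem_sdiff, Finset.mem_erase, Finset.mem_insert] at hx ⊢
      tauto
  rcases h' : pickMin key (F.erase v \ R') with _ | m'
  · simp only [Option.elim_none]
    rcases h : pickMin key (F \ R) with _ | m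
    · simp
    · simp only [Option.elim_some]
      linarith [(hp1 m).2]
  · have hm' := pickMin_some h'
    obtain ⟨m, h⟩ := pickMin_isSome (key := key) (⟨m', hsub hm'.1⟩ : (F \ R).Nonempty)
    rw [h]
    have hmm : key m ≤ key m' := (pickMin_some h).2 m' (hsub hm'.1)
    have hpmle : p m ≤ p m' := by
      rcases Prod.Lex.le_iff.mp hmm with hlt | ⟨heq, _⟩
      · exact le_of_lt hlt
      · exact le_of_eq heq
    simp only [Option.elim_some]
    linarith

end
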